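/- Let V ~ Unif(0,1), Λ ~ Unif(0,2π), and W a real random variable, all independent, and let Z₁, Z₂ be real random variables independent of (V,Λ,W) with Z₁ − Z₂ Gaussian with mean 0 and variance d. Define Y_i = √(−2 ln V) · cos(Z_i W + Λ) for i = 1, 2. Then E[Y_i] = 0, E[Y_i²] = 1, and E[Y₁ Y₂] = E[exp(−d W²/2)]. -/

import Mathlib

set_option linter.unusedSectionVars false
set_option maxHeartbeats 1000000

open MeasureTheory ProbabilityTheory Real
open scoped NNReal ENNReal

section AuxBdd

lemma aux_integrable_bdd {α : Type*} [MeasurableSpace α] {μ : Measure α} [IsFiniteMeasure μ]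
    {f : α → ℝ} (hf : AEStronglyMeasurable f μ) (C : ℝ)
    (h : ∀ x, |f x| ≤ C) : Integrable f μ :=
  Integrable.mono' (integrable_const C) hf (ae_of_all _ fun x => by
    simpa [Real.norm_eq_abs] using h x)

lemma aux_cos_int : ∫ y in (0:ℝ)..(2*Real.pi), Real.cos y = 0 := by
  simp [integral_cos, Real.sin_two_pi]

lemma aux_sin_int : ∫ y in (0:ℝ)..(2*Real.pi), Real.sin y = 0 := by
  simp [integral_sin, Real.cos_two_pi]

lemma aux_cos2_int : ∫ y in (0:ℝ)..(2*Real.pi), Real.cos (2*y) = 0 := by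
  rw [intervalIntegral.integral_comp_mul_left Real.cos (two_ne_zero)]
  have h4 : Real.sin (2 * (2*Real.pi)) = 0 := by
    have := Real.sin_nat_mul_pi 4
    norm_num at this
    convert this using 2; ring
  simp [integral_cos, h4]

lemma aux_sin2_int : ∫ y in (0:ℝ)..(2*Real.pi), Real.sin (2*y) = 0 := by
  rw [intervalIntegral.integral_comp_mul_left Real.sin (two_ne_zero)]
  have h4 : Real.cos (2 * (2*Real.pi)) = 1 := by
    have := Real.cos_nat_mul_two_pi 2
    norm_num at this
    convert this using 2
  simp [integral_sin, h4]

variable {Ω : Type*} [MeasureSpace Ω] [IsProbabilityMeasure (ℙ : Measure Ω)]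

lemma aux_angle_integral {Λ : Ω → ℝ} (hΛmeas : Measurable Λ)
    (hΛ : Measure.map Λ ℙ
      = (ENNReal.ofReal (2 * Real.pi))⁻¹ • volume.restrict (Set.Ioo (0 : ℝ) (2 * Real.pi)))
    {g : ℝ → ℝ} (hg : Measurable g)
    (hgint : ∫ y in (0:ℝ)..(2 * Real.pi), g y = 0) :
    ∫ x, g (Λ x) ∂ℙ = 0 := by
  rw [← integral_map hΛmeas.aemeasurable hg.aestronglyMeasurable, hΛ, integral_smul_measure,
    ← integral_Ioc_eq_integral_Ioo,
    ← intervalIntegral.integral_of_le (by positivity : (0:ℝ) ≤ 2*Real.pi), hgint]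
  simp

lemma aux_cos_add_zero {A L : Ω → ℝ} (hA : Measurable A) (hL : Measurable L)
    (hInd : IndepFun A L ℙ)
    (hcos : ∫ x, Real.cos (L x) ∂ℙ = 0) (hsin : ∫ x, Real.sin (L x) ∂ℙ = 0) :
    ∫ x, Real.cos (A x + L x) ∂ℙ = 0 := by
  have i1 : Integrable (fun x => Real.cos (A x) * Real.cos (L x)) ℙ :=
    aux_integrable_bdd ((measurable_cos.comp hA).mul (measurable_cos.comp hL)).aestronglyMeasurable 1
      (fun x => by rw [abs_mul]; exact mul_le_one₀ (Real.abs_cos_le_one _) (abs_nonneg _) (Real.abs_cos_le_one _))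
  have i2 : Integrable (fun x => Real.sin (A x) * Real.sin (L x)) ℙ :=
    aux_integrable_bdd ((measurable_sin.comp hA).mul (measurable_sin.comp hL)).aestronglyMeasurable 1
      (fun x => by rw [abs_mul]; exact mul_le_one₀ (Real.abs_sin_le_one _) (abs_nonneg _) (Real.abs_sin_le_one _))
  have e1 : ∫ x, Real.cos (A x) * Real.cos (L x) ∂ℙ
      = (∫ x, Real.cos (A x) ∂ℙ) * (∫ x, Real.cos (L x) ∂ℙ) :=
    (hInd.comp measurable_cos measurable_cos).integral_mul_eq_mul_integral
      (measurable_cos.comp hA).aestronglyMeasurable (measurable_cos.comp hL).aestronglyMeasurable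
  have e2 : ∫ x, Real.sin (A x) * Real.sin (L x) ∂ℙ
      = (∫ x, Real.sin (A x) ∂ℙ) * (∫ x, Real.sin (L x) ∂ℙ) :=
    (hInd.comp measurable_sin measurable_sin).integral_mul_eq_mul_integral
      (measurable_sin.comp hA).aestronglyMeasurable (measurable_sin.comp hL).aestronglyMeasurable
  calc ∫ x, Real.cos (A x + L x) ∂ℙ
      = ∫ x, (Real.cos (A x) * Real.cos (L x) - Real.sin (A x) * Real.sin (L x)) ∂ℙ := by
        simp_rw [Real.cos_add]
    _ = (∫ x, Real.cos (A x) * Real.cos (L x) ∂ℙ) - ∫ x, Real.sin (A x) * Real.sin (L x) ∂ℙ :=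
        integral_sub i1 i2
    _ = 0 := by rw [e1, e2, hcos, hsin]; ring

end AuxBdd

section AuxLog

lemma aux_neg_log_deriv : ∀ x ∈ Set.Ioo (0:ℝ) 1,
    HasDerivAt (fun y => y - y * Real.log y) (-Real.log x) x := by
  intro x hx
  have h : HasDerivAt (fun y => y - y * Real.log y) (1 - (Real.log x + 1)) x :=
    (hasDerivAt_id x).sub (Real.hasDerivAt_mul_log hx.1.ne')
  convert h using 1
  ring

lemma aux_neg_log_intble : IntervalIntegrable (fun y => -Real.log y) volume 0 1 := by
  have hcont : ContinuousOn (fun y : ℝ => y - y * Real.log y) (Set.Icc 0 1) :=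
    (continuous_id.sub Real.continuous_mul_log).continuousOn
  have h := intervalIntegral.integrableOn_deriv_of_nonneg hcont aux_neg_log_deriv
    (fun x hx => neg_nonneg.mpr (Real.log_nonpos hx.1.le hx.2.le))
  rw [intervalIntegrable_iff_integrableOn_Ioc_of_le zero_le_one]
  exact h

lemma aux_neg_log_integral : ∫ y in (0:ℝ)..1, -Real.log y = 1 := by
  have hcont : ContinuousOn (fun y : ℝ => y - y * Real.log y) (Set.Icc 0 1) :=
    (continuous_id.sub Real.continuous_mul_log).continuousOn
  rw [intervalIntegral.integral_eq_sub_of_hasDerivAt_of_le zero_le_one hcont aux_neg_log_deriv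
    aux_neg_log_intble]
  simp

lemma aux_log_Ioo : ∫ v in Set.Ioo (0:ℝ) 1, (-2) * Real.log v = 2 := by
  have h : ∫ v in Set.Ioo (0:ℝ) 1, -Real.log v = 1 := by
    rw [← integral_Ioc_eq_integral_Ioo, ← intervalIntegral.integral_of_le zero_le_one]
    exact aux_neg_log_integral
  have heq : ∀ v : ℝ, (-2) * Real.log v = (2:ℝ) * (-Real.log v) := fun v => by ring
  simp_rw [heq]
  rw [integral_const_mul, h]
  norm_num

end AuxLog

section AuxGauss

open Complex

lemma aux_real_fourier (s : ℝ) (hs : 0 < s) (w : ℝ) :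
    ∫ x : ℝ, Real.exp (-(1/(2*s)) * x ^ 2) * Real.cos (w * x)
      = Real.sqrt (2 * Real.pi * s) * Real.exp (-(s * w ^ 2) / 2) := by
  set b : ℂ := ((1/(2*s) : ℝ) : ℂ) with hb_def
  have hb : 0 < b.re := by simp [hb_def]; positivity
  have key := fourierIntegral_gaussian hb (w : ℂ)
  have hfun : ∀ x : ℝ, Complex.exp (Complex.I * (w:ℂ) * (x:ℂ)) * Complex.exp (-b * (x:ℂ) ^ 2)
      = Complex.exp (-b * (x:ℂ) ^ 2 + (Complex.I * (w:ℂ)) * (x:ℂ) + 0) := by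
    intro x
    rw [← Complex.exp_add]
    ring_nf
  simp_rw [hfun] at key
  have hInt : Integrable (fun x : ℝ => Complex.exp (-b * (x:ℂ) ^ 2 + (Complex.I * (w:ℂ)) * (x:ℂ) + 0)) :=
    integrable_cexp_quadratic hb _ _
  have hre := congrArg Complex.re key
  have hir := integral_re (μ := volume) hInt
  simp only [RCLike.re_to_complex] at hir
  rw [← hir] at hre
  have hlhs : ∀ x : ℝ, (Complex.exp (-b * (x:ℂ) ^ 2 + (Complex.I * (w:ℂ)) * (x:ℂ) + 0)).re
      = Real.exp (-(1/(2*s)) * x ^ 2) * Real.cos (w * x) := by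
    intro x
    have harg : -b * (x:ℂ) ^ 2 + (Complex.I * (w:ℂ)) * (x:ℂ) + 0
        = ((-(1/(2*s)) * x ^ 2 : ℝ) : ℂ) + ((w * x : ℝ) : ℂ) * Complex.I := by
      push_cast [hb_def]
      ring
    rw [harg, Complex.exp_add, ← Complex.ofReal_exp]
    rw [Complex.re_ofReal_mul, Complex.exp_ofReal_mul_I_re]
  simp_rw [hlhs] at hre
  rw [hre]
  have hπb : (↑Real.pi / b : ℂ) = ((2 * Real.pi * s : ℝ) : ℂ) := by
    rw [hb_def]
    push_cast
    field_simp
  have hexparg : (-(w:ℂ) ^ 2 / (4 * b)) = ((-(s * w ^ 2) / 2 : ℝ) : ℂ) := by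
    rw [hb_def]
    push_cast
    field_simp
    ring
  rw [hπb, hexparg, ← Complex.ofReal_exp]
  have hpow : ((2 * Real.pi * s : ℝ) : ℂ) ^ (1/2 : ℂ) = ((Real.sqrt (2 * Real.pi * s) : ℝ) : ℂ) := by
    have h2 : ((1:ℂ)/2) = ((1/2 : ℝ) : ℂ) := by norm_num
    rw [h2, ← Complex.ofReal_cpow (by positivity), Real.sqrt_eq_rpow]
  rw [hpow, ← Complex.ofReal_mul, Complex.ofReal_re]

lemma aux_gauss_cos (d : ℝ≥0) (w : ℝ) :
    ∫ x, Real.cos (x * w) ∂(gaussianReal 0 d) = Real.exp (-((d:ℝ) * w ^ 2) / 2) := by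
  by_cases hd : d = 0
  · subst hd
    rw [gaussianReal_zero_var]
    simp
  have hd' : 0 < (d:ℝ) := by positivity
  rw [gaussianReal_of_var_ne_zero _ hd, gaussianPDF_def]
  have hwd : ∫ x, Real.cos (x * w) ∂(volume.withDensity fun x => ENNReal.ofReal (gaussianPDFReal 0 d x))
      = ∫ x, Real.toNNReal (gaussianPDFReal 0 d x) • Real.cos (x * w) ∂volume :=
    integral_withDensity_eq_integral_smul (measurable_gaussianPDFReal 0 d).real_toNNReal _
  rw [hwd]
  have hsmul : ∀ x : ℝ, Real.toNNReal (gaussianPDFReal 0 d x) • Real.cos (x * w)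
      = (Real.sqrt (2 * Real.pi * d))⁻¹ * (Real.exp (-(1/(2*(d:ℝ))) * x ^ 2) * Real.cos (w * x)) := by
    intro x
    rw [NNReal.smul_def, smul_eq_mul, Real.coe_toNNReal _ (gaussianPDFReal_nonneg 0 d x),
      gaussianPDFReal]
    have h0 : -(x - 0) ^ 2 / (2 * (d:ℝ)) = -(1/(2*(d:ℝ))) * x ^ 2 := by field_simp; ring
    rw [h0, mul_comm w x]
    ring
  simp_rw [hsmul]
  rw [integral_const_mul, aux_real_fourier (d:ℝ) hd' w]
  rw [← mul_assoc, inv_mul_cancel₀ (by positivity), one_mul]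

end AuxGauss

/-- Mean, variance and cross-covariance of the spectral construction
`Y i = √(−2 ln V) · cos(Z i · W + Λ)` on a graph, where `V ~ Unif(0,1)`,
`Λ ~ Unif(0,2π)`, `W ~ F`, all independent, and `Z₁ − Z₂ ~ N(0, d)`. -/
theorem spectral_construction_moments
    {Ω : Type*} [MeasureSpace Ω] [IsProbabilityMeasure (ℙ : Measure Ω)]
    (V Λ W Z₁ Z₂ : Ω → ℝ)
    (hVmeas : Measurable V) (hΛmeas : Measurable Λ) (hWmeas : Measurable W)
    (hZ₁meas : Measurable Z₁) (hZ₂meas : Measurable Z₂)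
    -- V is uniform on (0,1)
    (hV : Measure.map V ℙ = volume.restrict (Set.Ioo (0 : ℝ) 1))
    -- Λ is uniform on (0, 2π)
    (hΛ : Measure.map Λ ℙ
      = (ENNReal.ofReal (2 * Real.pi))⁻¹ • volume.restrict (Set.Ioo (0 : ℝ) (2 * Real.pi)))
    -- mutual independence of V, Λ, W and the pair (Z₁, Z₂)
    (hIndepV : IndepFun V (fun x => (Λ x, W x, Z₁ x, Z₂ x)) ℙ)
    (hIndepΛ : IndepFun Λ (fun x => (W x, Z₁ x, Z₂ x)) ℙ)
    (hIndepW : IndepFun W (fun x => (Z₁ x, Z₂ x)) ℙ)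
    -- Z₁ − Z₂ is Gaussian with mean 0 and variance d
    (d : ℝ≥0) (hZ : Measure.map (fun x => Z₁ x - Z₂ x) ℙ = gaussianReal 0 d)
    (Y : Fin 2 → Ω → ℝ)
    (hY₁ : Y 0 = fun x => Real.sqrt (-2 * Real.log (V x)) * Real.cos (Z₁ x * W x + Λ x))
    (hY₂ : Y 1 = fun x => Real.sqrt (-2 * Real.log (V x)) * Real.cos (Z₂ x * W x + Λ x)) :
    (∀ i, ∫ x, Y i x ∂ℙ = 0) ∧ (∀ i, ∫ x, (Y i x) ^ 2 ∂ℙ = 1) ∧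
      ∫ x, Y 0 x * Y 1 x ∂ℙ = ∫ x, Real.exp (-((d : ℝ) * (W x) ^ 2) / 2) ∂ℙ := by
  -- basic measurability
  have hφ : Measurable (fun v : ℝ => Real.sqrt (-2 * Real.log v)) :=
    Real.continuous_sqrt.measurable.comp (Real.measurable_log.const_mul (-2))
  have hTmeas : Measurable (fun x => (Λ x, W x, Z₁ x, Z₂ x)) :=
    hΛmeas.prodMk (hWmeas.prodMk (hZ₁meas.prodMk hZ₂meas))
  have hg₁ : Measurable (fun q : ℝ × ℝ × ℝ × ℝ => Real.cos (q.2.2.1 * q.2.1 + q.1)) := by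
    fun_prop
  have hg₂ : Measurable (fun q : ℝ × ℝ × ℝ × ℝ => Real.cos (q.2.2.2 * q.2.1 + q.1)) := by
    fun_prop
  have hA₁ : Measurable (fun x => Z₁ x * W x) := hZ₁meas.mul hWmeas
  have hA₂ : Measurable (fun x => Z₂ x * W x) := hZ₂meas.mul hWmeas
  -- angle integrals
  have hcosΛ : ∫ x, Real.cos (Λ x) ∂ℙ = 0 :=
    aux_angle_integral hΛmeas hΛ measurable_cos aux_cos_int
  have hsinΛ : ∫ x, Real.sin (Λ x) ∂ℙ = 0 :=
    aux_angle_integral hΛmeas hΛ measurable_sin aux_sin_int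
  have hcos2Λ : ∫ x, Real.cos (2 * Λ x) ∂ℙ = 0 :=
    aux_angle_integral hΛmeas hΛ (measurable_cos.comp (measurable_id.const_mul 2)) aux_cos2_int
  have hsin2Λ : ∫ x, Real.sin (2 * Λ x) ∂ℙ = 0 :=
    aux_angle_integral hΛmeas hΛ (measurable_sin.comp (measurable_id.const_mul 2)) aux_sin2_int
  -- independence of the Z·W terms from Λ
  have hIndA₁ : IndepFun (fun x => Z₁ x * W x) Λ ℙ :=
    hIndepΛ.symm.comp (show Measurable (fun p : ℝ × ℝ × ℝ => p.2.1 * p.1) by fun_prop)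
      measurable_id
  have hIndA₂ : IndepFun (fun x => Z₂ x * W x) Λ ℙ :=
    hIndepΛ.symm.comp (show Measurable (fun p : ℝ × ℝ × ℝ => p.2.2 * p.1) by fun_prop)
      measurable_id
  have hIndA₁₂ : IndepFun (fun x => Z₁ x * W x + Z₂ x * W x) Λ ℙ :=
    hIndepΛ.symm.comp (show Measurable (fun p : ℝ × ℝ × ℝ => p.2.1 * p.1 + p.2.2 * p.1) by fun_prop)
      measurable_id
  -- zero means of the cosine terms
  have hR₁ : ∫ x, Real.cos (Z₁ x * W x + Λ x) ∂ℙ = 0 :=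
    aux_cos_add_zero hA₁ hΛmeas hIndA₁ hcosΛ hsinΛ
  have hR₂ : ∫ x, Real.cos (Z₂ x * W x + Λ x) ∂ℙ = 0 :=
    aux_cos_add_zero hA₂ hΛmeas hIndA₂ hcosΛ hsinΛ
  -- expectation of -2 log V
  have hVae : ∀ᵐ x ∂ℙ, V x ∈ Set.Ioo (0:ℝ) 1 := by
    have h0 : ℙ (V ⁻¹' (Set.Ioo (0:ℝ) 1)ᶜ) = 0 := by
      rw [← Measure.map_apply hVmeas measurableSet_Ioo.compl, hV,
        Measure.restrict_apply measurableSet_Ioo.compl]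
      simp
    exact ae_iff.mpr h0
  have hS2 : ∫ x, Real.sqrt (-2 * Real.log (V x)) ^ 2 ∂ℙ = 2 := by
    have hcong : ∀ᵐ x ∂ℙ, Real.sqrt (-2 * Real.log (V x)) ^ 2 = -2 * Real.log (V x) := by
      filter_upwards [hVae] with x hx
      exact Real.sq_sqrt (by nlinarith [Real.log_nonpos hx.1.le hx.2.le])
    rw [integral_congr_ae hcong]
    calc ∫ x, -2 * Real.log (V x) ∂ℙ
        = ∫ v, -2 * Real.log v ∂(Measure.map V ℙ) :=
          (integral_map hVmeas.aemeasurable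
            ((Real.measurable_log.const_mul (-2)).aestronglyMeasurable)).symm
      _ = 2 := by rw [hV]; exact aux_log_Ioo
  -- second moments of the cosine terms
  have hRsq : ∀ (A : Ω → ℝ), Measurable A → IndepFun A Λ ℙ →
      ∫ x, Real.cos (A x + Λ x) ^ 2 ∂ℙ = 1/2 := by
    intro A hA hInd
    have h2t : ∀ a l : ℝ, Real.cos (a + l) ^ 2 = 1/2 + Real.cos (2*a + 2*l) / 2 := by
      intro a l
      rw [Real.cos_sq]
      ring_nf
    simp_rw [h2t]
    have hint2 : Integrable (fun x => Real.cos (2 * A x + 2 * Λ x) / 2) ℙ :=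
      (aux_integrable_bdd (measurable_cos.comp ((hA.const_mul 2).add (hΛmeas.const_mul 2))).aestronglyMeasurable
        1 (fun x => Real.abs_cos_le_one _)).div_const 2
    rw [integral_add (integrable_const _) hint2]
    have hz : ∫ x, Real.cos (2 * A x + 2 * Λ x) / 2 ∂ℙ = 0 := by
      rw [integral_div, aux_cos_add_zero (hA.const_mul 2) (hΛmeas.const_mul 2)
        (hInd.comp (measurable_id.const_mul 2) (measurable_id.const_mul 2)) hcos2Λ hsin2Λ]
      norm_num
    rw [hz]
    simp
  -- the moments, via independence of V from the rest
  have fact : ∀ (ψ : ℝ → ℝ) (g : ℝ × ℝ × ℝ × ℝ → ℝ), Measurable ψ → Measurable g →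
      ∫ x, ψ (V x) * g (Λ x, W x, Z₁ x, Z₂ x) ∂ℙ
        = (∫ x, ψ (V x) ∂ℙ) * ∫ x, g (Λ x, W x, Z₁ x, Z₂ x) ∂ℙ := by
    intro ψ g hψ hg
    exact (hIndepV.comp hψ hg).integral_mul_eq_mul_integral (hψ.comp hVmeas).aestronglyMeasurable
      (hg.comp hTmeas).aestronglyMeasurable
  -- first moments
  have hm0 : ∫ x, Y 0 x ∂ℙ = 0 := by
    rw [hY₁]
    have := fact (fun v => Real.sqrt (-2 * Real.log v))
      (fun q => Real.cos (q.2.2.1 * q.2.1 + q.1)) hφ hg₁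
    simp only at this ⊢
    rw [this, hR₁, mul_zero]
  have hm1 : ∫ x, Y 1 x ∂ℙ = 0 := by
    rw [hY₂]
    have := fact (fun v => Real.sqrt (-2 * Real.log v))
      (fun q => Real.cos (q.2.2.2 * q.2.1 + q.1)) hφ hg₂
    simp only at this ⊢
    rw [this, hR₂, mul_zero]
  -- second moments
  have hv0 : ∫ x, (Y 0 x) ^ 2 ∂ℙ = 1 := by
    rw [hY₁]
    simp only [mul_pow]
    have := fact (fun v => Real.sqrt (-2 * Real.log v) ^ 2)
      (fun q => Real.cos (q.2.2.1 * q.2.1 + q.1) ^ 2) (hφ.pow_const 2) (hg₁.pow_const 2)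
    simp only at this
    rw [this, hS2, hRsq _ hA₁ hIndA₁]
    norm_num
  have hv1 : ∫ x, (Y 1 x) ^ 2 ∂ℙ = 1 := by
    rw [hY₂]
    simp only [mul_pow]
    have := fact (fun v => Real.sqrt (-2 * Real.log v) ^ 2)
      (fun q => Real.cos (q.2.2.2 * q.2.1 + q.1) ^ 2) (hφ.pow_const 2) (hg₂.pow_const 2)
    simp only at this
    rw [this, hS2, hRsq _ hA₂ hIndA₂]
    norm_num
  -- cross moment
  have hcross : ∫ x, Y 0 x * Y 1 x ∂ℙ = ∫ x, Real.exp (-((d : ℝ) * (W x) ^ 2) / 2) ∂ℙ := by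
    rw [hY₁, hY₂]
    simp only
    have hpt : ∀ x, (Real.sqrt (-2 * Real.log (V x)) * Real.cos (Z₁ x * W x + Λ x)) *
        (Real.sqrt (-2 * Real.log (V x)) * Real.cos (Z₂ x * W x + Λ x))
        = Real.sqrt (-2 * Real.log (V x)) ^ 2 *
          (Real.cos (Z₁ x * W x + Λ x) * Real.cos (Z₂ x * W x + Λ x)) := by
      intro x; ring
    simp_rw [hpt]
    have := fact (fun v => Real.sqrt (-2 * Real.log v) ^ 2)
      (fun q => Real.cos (q.2.2.1 * q.2.1 + q.1) * Real.cos (q.2.2.2 * q.2.1 + q.1))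
      (hφ.pow_const 2) (hg₁.mul hg₂)
    simp only at this
    rw [this, hS2]
    -- product-to-sum
    have hkey : ∀ u v : ℝ, Real.cos u * Real.cos v = (Real.cos (u - v) + Real.cos (u + v)) / 2 := by
      intro u v
      rw [Real.cos_sub, Real.cos_add]
      ring
    have hprod : ∀ x, Real.cos (Z₁ x * W x + Λ x) * Real.cos (Z₂ x * W x + Λ x)
        = (Real.cos ((Z₁ x - Z₂ x) * W x) + Real.cos ((Z₁ x * W x + Z₂ x * W x) + 2 * Λ x)) / 2 := by
      intro x
      rw [hkey, show (Z₁ x * W x + Λ x) - (Z₂ x * W x + Λ x) = (Z₁ x - Z₂ x) * W x by ring,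
        show (Z₁ x * W x + Λ x) + (Z₂ x * W x + Λ x) = (Z₁ x * W x + Z₂ x * W x) + 2 * Λ x by ring]
    simp_rw [hprod]
    have hDmeas : Measurable (fun x => Z₁ x - Z₂ x) := hZ₁meas.sub hZ₂meas
    have hint1 : Integrable (fun x => Real.cos ((Z₁ x - Z₂ x) * W x)) ℙ :=
      aux_integrable_bdd (measurable_cos.comp (hDmeas.mul hWmeas)).aestronglyMeasurable 1
        (fun x => Real.abs_cos_le_one _)
    have hint2 : Integrable (fun x => Real.cos ((Z₁ x * W x + Z₂ x * W x) + 2 * Λ x)) ℙ :=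
      aux_integrable_bdd (measurable_cos.comp ((hA₁.add hA₂).add (hΛmeas.const_mul 2))).aestronglyMeasurable 1
        (fun x => Real.abs_cos_le_one _)
    rw [integral_div, integral_add hint1 hint2,
      aux_cos_add_zero (A := fun x => Z₁ x * W x + Z₂ x * W x) (hA₁.add hA₂) (hΛmeas.const_mul 2)
        (hIndA₁₂.comp measurable_id (measurable_id.const_mul 2)) hcos2Λ hsin2Λ, add_zero]
    -- Fubini with the gaussian
    have hWD : IndepFun W (fun x => Z₁ x - Z₂ x) ℙ :=
      hIndepW.comp measurable_id (measurable_fst.sub measurable_snd)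
    have hmap : Measure.map (fun x => (W x, Z₁ x - Z₂ x)) ℙ
        = (Measure.map W ℙ).prod (Measure.map (fun x => Z₁ x - Z₂ x) ℙ) :=
      (indepFun_iff_map_prod_eq_prod_map_map hWmeas.aemeasurable hDmeas.aemeasurable).mp hWD
    haveI : IsProbabilityMeasure (Measure.map W ℙ) :=
      Measure.isProbabilityMeasure_map hWmeas.aemeasurable
    haveI : IsProbabilityMeasure (Measure.map (fun x => Z₁ x - Z₂ x) ℙ) :=
      Measure.isProbabilityMeasure_map hDmeas.aemeasurable
    have hgm : Measurable (fun p : ℝ × ℝ => Real.cos (p.2 * p.1)) := by fun_prop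
    have hDW : ∫ x, Real.cos ((Z₁ x - Z₂ x) * W x) ∂ℙ
        = ∫ w, ∫ v, Real.cos (v * w) ∂(Measure.map (fun x => Z₁ x - Z₂ x) ℙ)
            ∂(Measure.map W ℙ) := by
      calc ∫ x, Real.cos ((Z₁ x - Z₂ x) * W x) ∂ℙ
          = ∫ p, Real.cos (p.2 * p.1) ∂(Measure.map (fun x => (W x, Z₁ x - Z₂ x)) ℙ) :=
            (integral_map (hWmeas.aemeasurable.prodMk hDmeas.aemeasurable)
              hgm.aestronglyMeasurable).symm
        _ = ∫ p, Real.cos (p.2 * p.1)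
              ∂((Measure.map W ℙ).prod (Measure.map (fun x => Z₁ x - Z₂ x) ℙ)) := by rw [hmap]
        _ = ∫ w, ∫ v, Real.cos (v * w) ∂(Measure.map (fun x => Z₁ x - Z₂ x) ℙ)
              ∂(Measure.map W ℙ) :=
            integral_prod _ (aux_integrable_bdd hgm.aestronglyMeasurable 1
              (fun p => Real.abs_cos_le_one _))
    rw [hDW, hZ]
    simp_rw [aux_gauss_cos d]
    rw [integral_map hWmeas.aemeasurable (Measurable.aestronglyMeasurable (by fun_prop))]
    ring
  refine ⟨?_, ?_, hcross⟩
  · intro i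
    fin_cases i
    · exact hm0
    · exact hm1
  · intro i
    fin_cases i
    · exact hv0
    · exact hv1
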